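/- Let p be a prime with p ≡ 1 (mod 4) and p > 1, and set d = (p − 1)/2. Let Z_d = {z ∈ 𝔽_p : z^d = 1} (the set of nonzero quadratic residues mod p). If there exists a finite set A ⊆ 𝔽_p with A ∸ A = Z_d, where A ∸ A = {a − a' : a, a' ∈ A, a ≠ a'}, then p = (n² + 1)/2 for some odd positive integer n. -/

import Mathlib

open Polynomial

section Helpers

variable {F : Type*} [Field F]

open Polynomial
variable {F : Type*} [Field F]

lemma mem_degreeLT_iff {n : ℕ} {f : F[X]} :
    f ∈ degreeLT F n ↔ ∀ i, n ≤ i → f.coeff i = 0 := by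
  rw [Polynomial.mem_degreeLT, Polynomial.degree_lt_iff_coeff_zero]

lemma natDegree_le_of_mem_degreeLT {n : ℕ} {f : F[X]} (hf : f ∈ degreeLT F (n+1)) :
    f.natDegree ≤ n := by
  rcases eq_or_ne f 0 with rfl | h
  · simp
  · rw [Polynomial.mem_degreeLT] at hf
    have := Polynomial.natDegree_lt_iff_degree_lt (p := f) (n := n+1) h |>.mpr (by exact_mod_cast hf)
    omega

lemma reflect_reflect' (N : ℕ) (f : F[X]) : reflect N (reflect N f) = f := by
  ext i
  simp [Polynomial.coeff_reflect, Polynomial.revAt_invol]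

lemma reflect_mem_degreeLT {m : ℕ} {f : F[X]} (hf : f.natDegree ≤ m) :
    reflect m f ∈ degreeLT F (m+1) := by
  rw [mem_degreeLT_iff]
  intro i hi
  rw [Polynomial.coeff_reflect]
  rw [Polynomial.revAt_eq_self_of_lt (by omega)]
  exact Polynomial.coeff_eq_zero_of_natDegree_lt (by omega)

lemma reflect_one_X_sub_C (γ : F) : reflect 1 (X - C γ) = 1 - C γ * X := by
  ext i
  rw [Polynomial.coeff_reflect]
  match i with
  | 0 => simp [Polynomial.revAt_le]
  | 1 => simp [Polynomial.revAt_le, Polynomial.coeff_one]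
  | (n+2) => rw [Polynomial.revAt_eq_self_of_lt (by omega)]
             simp [Polynomial.coeff_one, Polynomial.coeff_X, Polynomial.coeff_C]

lemma reflect_pow_linear (f : F[X]) (hf : f.natDegree ≤ 1) (E : ℕ) :
    reflect E (f ^ E) = (reflect 1 f) ^ E := by
  induction E with
  | zero => simp
  | succ n ih =>
      have hfn : (f ^ n).natDegree ≤ n := le_trans (Polynomial.natDegree_pow_le) (by nlinarith)
      rw [pow_succ, Polynomial.reflect_mul (f ^ n) f hfn hf, ih, pow_succ]

lemma reflect_sum {α : Type*} (N : ℕ) (S : Finset α) (f : α → F[X]) :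
    reflect N (∑ a ∈ S, f a) = ∑ a ∈ S, reflect N (f a) := by
  induction S using Finset.cons_induction with
  | empty => simp [Polynomial.reflect_zero]
  | cons a S ha ih => rw [Finset.sum_cons, Finset.sum_cons, Polynomial.reflect_add, ih]

lemma taylor_pow' (r : F) (f : F[X]) (n : ℕ) : taylor r (f ^ n) = (taylor r f) ^ n := by
  induction n with
  | zero => simp
  | succ n ih => rw [pow_succ, Polynomial.taylor_mul, ih, pow_succ]

lemma one_sub_CX_pow (γ : F) (hγ : γ ≠ 0) (E : ℕ) :
    (1 - C γ * X : F[X]) ^ E = C ((-γ)^E) * (X - C γ⁻¹) ^ E := by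
  have h : (1 : F[X]) - C γ * X = C (-γ) * (X - C γ⁻¹) := by
    rw [mul_sub, ← Polynomial.C_mul]
    rw [show (-γ) * γ⁻¹ = -1 by field_simp]
    simp [Polynomial.C_neg]
    ring
  rw [h, mul_pow, ← Polynomial.C_pow]

theorem ledger (s : ℕ) : ∀ (S : Finset F), S.card = s →
    ∀ (M : ℕ), ∀ (E m : ℕ) (q : F → F[X]) (T : F[X]),
    (∀ c : ℕ, 0 < c → c ≤ E + m → (c : F) ≠ 0) →
    M + (s - 1) * (m + 1) ≤ E →
    (∀ a ∈ S, q a ∈ degreeLT F (m + 1)) →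
    T ∈ degreeLT F M →
    (∑ a ∈ S, (X - C a) ^ E * q a) = T →
    ∀ a ∈ S, q a = 0 := by
  classical
  induction s with
  | zero =>
      intro S hS M E m q T _ _ _ _ _ a ha
      rw [Finset.card_eq_zero.mp hS] at ha
      exact absurd ha (Finset.notMem_empty a)
  | succ s ihs =>
      intro S hS M
      induction M with
      | zero =>
          intro E m q T hchar hE hq hT hsum
          have hT0 : T = 0 := by
            rw [mem_degreeLT_iff] at hT
            ext i; simpa using hT i (Nat.zero_le i)
          rw [hT0] at hsum
          rcases Nat.eq_zero_or_pos s with rfl | hs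
          · -- singleton
            obtain ⟨a₀, rfl⟩ := Finset.card_eq_one.mp hS
            intro a ha
            rw [Finset.mem_singleton] at ha; subst ha
            rw [Finset.sum_singleton] at hsum
            rcases mul_eq_zero.mp hsum with h | h
            · exact absurd h (pow_ne_zero _ (Polynomial.X_sub_C_ne_zero a))
            · exact h
          · -- reflection step
            obtain ⟨a₀, ha₀⟩ := Finset.card_pos.mp (by omega : 0 < S.card)
            -- Step 1: taylor shift
            have key : ∀ a : F, (taylor a₀) ((X - C a) ^ E * q a)
                = (X - C (a - a₀)) ^ E * (taylor a₀) (q a) := by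
              intro a
              rw [Polynomial.taylor_mul, taylor_pow']
              congr 2
              rw [map_sub, Polynomial.taylor_X, Polynomial.taylor_C, Polynomial.C_sub]
              ring
            have h2 : (∑ a ∈ S, (X - C (a - a₀)) ^ E * (taylor a₀ (q a))) = 0 := by
              have h0 := congrArg (taylor a₀) hsum
              rw [map_sum, map_zero] at h0
              rw [← h0]
              exact Finset.sum_congr rfl (fun a _ => (key a).symm)
            -- Step 2: reflect
            have key2 : ∀ a ∈ S, reflect (E + m) ((X - C (a - a₀)) ^ E * (taylor a₀) (q a))
                = (1 - C (a - a₀) * X) ^ E * reflect m ((taylor a₀) (q a)) := by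
              intro a ha
              have hnd1 : ((X - C (a - a₀)) ^ E).natDegree ≤ E := by
                refine le_trans Polynomial.natDegree_pow_le ?_
                rw [Polynomial.natDegree_X_sub_C]; omega
              have hnd2 : ((taylor a₀) (q a)).natDegree ≤ m := by
                rw [Polynomial.natDegree_taylor]
                exact natDegree_le_of_mem_degreeLT (hq a ha)
              rw [Polynomial.reflect_mul _ _ hnd1 hnd2]
              congr 1
              rw [reflect_pow_linear _ (by rw [Polynomial.natDegree_X_sub_C]) E,
                reflect_one_X_sub_C]
            have h3 : (∑ a ∈ S, (1 - C (a - a₀) * X) ^ E * reflect m (taylor a₀ (q a))) = 0 := by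
              have h0 := congrArg (reflect (E + m)) h2
              rw [reflect_sum, Polynomial.reflect_zero] at h0
              rw [← h0]
              exact Finset.sum_congr rfl (fun a ha => (key2 a ha).symm)
            -- split off a₀
            have h4 : (∑ a ∈ S.erase a₀, (1 - C (a - a₀) * X) ^ E * reflect m (taylor a₀ (q a)))
                = -(reflect m (taylor a₀ (q a₀))) := by
              have hsplit := Finset.sum_erase_add S
                (fun a => (1 - C (a - a₀) * X) ^ E * reflect m (taylor a₀ (q a))) ha₀
              rw [← hsplit] at h3
              simp only [sub_self, Polynomial.C_0, zero_mul, sub_zero, one_pow, one_mul] at h3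
              exact eq_neg_of_add_eq_zero_left h3
            have hsub : ∀ a : F, a₀ + (a - a₀) = a := fun a => by ring
            have hsum' : (∑ b ∈ (S.erase a₀).image (fun a => (a - a₀)⁻¹),
                (X - C b) ^ E * (C ((-(b⁻¹))^E) * reflect m (taylor a₀ (q (a₀ + b⁻¹))))) =
                -(reflect m (taylor a₀ (q a₀))) := by
              rw [Finset.sum_image]
              · rw [← h4]
                apply Finset.sum_congr rfl
                intro a ha
                have hγ : a - a₀ ≠ 0 := sub_ne_zero.mpr (Finset.ne_of_mem_erase ha)
                rw [inv_inv, hsub a, one_sub_CX_pow (a - a₀) hγ E]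
                ring
              · intro x hx y hy hxy
                have := inv_injective hxy
                exact sub_left_inj.mp this
            have hinj : Set.InjOn (fun a : F => (a - a₀)⁻¹) (S.erase a₀) := by
              intro x _ y _ hxy
              simp only at hxy
              exact sub_left_inj.mp (inv_injective hxy)
            have hcard' : ((S.erase a₀).image (fun a => (a - a₀)⁻¹)).card = s := by
              rw [Finset.card_image_of_injOn hinj, Finset.card_erase_of_mem ha₀, hS]
              omega
            have hq2deg : ∀ b ∈ (S.erase a₀).image (fun a => (a - a₀)⁻¹),
                (C ((-(b⁻¹))^E) * reflect m (taylor a₀ (q (a₀ + b⁻¹)))) ∈ degreeLT F (m+1) := by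
              intro b hb
              rw [Finset.mem_image] at hb
              obtain ⟨a, ha, rfl⟩ := hb
              have hmem : reflect m (taylor a₀ (q (a₀ + ((a - a₀)⁻¹)⁻¹))) ∈ degreeLT F (m+1) := by
                apply reflect_mem_degreeLT
                rw [Polynomial.natDegree_taylor, inv_inv, hsub a]
                exact natDegree_le_of_mem_degreeLT (hq a (Finset.mem_of_mem_erase ha))
              rw [← Polynomial.smul_eq_C_mul]
              exact Submodule.smul_mem _ _ hmem
            have hT' : -(reflect m (taylor a₀ (q a₀))) ∈ degreeLT F (m+1) := by
              apply Submodule.neg_mem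
              apply reflect_mem_degreeLT
              rw [Polynomial.natDegree_taylor]
              exact natDegree_le_of_mem_degreeLT (hq a₀ ha₀)
            have hEcond : (m+1) + (s - 1) * (m + 1) ≤ E := by
              obtain ⟨s', rfl⟩ : ∃ s', s = s' + 1 := ⟨s - 1, by omega⟩
              have h5 : (s' + 1) * (m + 1) ≤ E := by simpa using hE
              have h6 : (m+1) + (s' + 1 - 1) * (m+1) = (s' + 1) * (m+1) := by
                rw [Nat.succ_sub_one]; ring
              omega
            have hres := ihs _ hcard' (m+1) E m
              (fun b => C ((-(b⁻¹))^E) * reflect m (taylor a₀ (q (a₀ + b⁻¹))))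
              (-(reflect m (taylor a₀ (q a₀)))) hchar hEcond hq2deg hT' hsum'
            have hqzero : ∀ a ∈ S.erase a₀, q a = 0 := by
              intro a ha
              have hb : (a - a₀)⁻¹ ∈ (S.erase a₀).image (fun a => (a - a₀)⁻¹) :=
                Finset.mem_image_of_mem _ ha
              have h5 := hres _ hb
              rw [inv_inv, hsub a] at h5
              have hγ : a - a₀ ≠ 0 := sub_ne_zero.mpr (Finset.ne_of_mem_erase ha)
              have hC : (C ((-(a - a₀))^E) : F[X]) ≠ 0 := by
                rw [Ne, Polynomial.C_eq_zero]
                exact pow_ne_zero _ (neg_ne_zero.mpr hγ)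
              have hra : reflect m (taylor a₀ (q a)) = 0 := by
                rcases mul_eq_zero.mp h5 with h' | h'
                · exact absurd h' hC
                · exact h'
              have htz : taylor a₀ (q a) = 0 := by
                have h6 := congrArg (reflect m) hra
                rw [reflect_reflect'] at h6
                simpa using h6
              exact Polynomial.taylor_injective a₀ (by rw [htz, map_zero])
            intro a ha
            rcases eq_or_ne a a₀ with rfl | hne
            · have hsplit := Finset.sum_erase_add S (fun x => (X - C x) ^ E * q x) ha₀
              rw [← hsplit, Finset.sum_eq_zero (fun x hx => by rw [hqzero x hx, mul_zero]),
                zero_add] at hsum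
              rcases mul_eq_zero.mp hsum with h' | h'
              · exact absurd h' (pow_ne_zero _ (Polynomial.X_sub_C_ne_zero a))
              · exact h'
            · exact hqzero a (Finset.mem_erase.mpr ⟨hne, ha⟩)
      | succ M ihM =>
          intro E m q T hchar hE hq hT hsum
          obtain ⟨E', rfl⟩ : ∃ E', E = E' + 1 := ⟨E - 1, by omega⟩
          set q' : F → F[X] := fun a => C ((E':F)+1) * q a + (X - C a) * derivative (q a) with hq'
          have hder : (∑ a ∈ S, (X - C a) ^ E' * q' a) = derivative T := by
            rw [← hsum, map_sum]
            apply Finset.sum_congr rfl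
            intro a _
            rw [derivative_mul, derivative_pow]
            simp [Polynomial.derivative_X_sub_C, hq']
            ring
          have hq'deg : ∀ a ∈ S, q' a ∈ degreeLT F (m+1) := by
            intro a ha
            rw [mem_degreeLT_iff]
            intro i hi
            have h1 := mem_degreeLT_iff.mp (hq a ha)
            simp only [hq', Polynomial.coeff_add, Polynomial.coeff_C_mul]
            rw [h1 i hi]
            have h2 : ((X - C a) * derivative (q a)).coeff i
                = (X * derivative (q a)).coeff i - a * (derivative (q a)).coeff i := by
              rw [sub_mul, Polynomial.coeff_sub, Polynomial.coeff_C_mul]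
            rw [h2]
            have h3 : (derivative (q a)).coeff i = 0 := by
              rw [Polynomial.coeff_derivative, h1 (i+1) (by omega)]; ring
            have h4 : (X * derivative (q a)).coeff i = 0 := by
              match i, hi with
              | (n+1), hi =>
                rw [Polynomial.coeff_X_mul, Polynomial.coeff_derivative, h1 (n+1) (by omega)]
                ring
            rw [h3, h4]; ring
          have hTd : derivative T ∈ degreeLT F M := by
            rw [mem_degreeLT_iff]
            intro i hi
            rw [Polynomial.coeff_derivative, mem_degreeLT_iff.mp hT (i+1) (by omega)]
            ring
          have hres := ihM E' m q' (derivative T)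
            (fun c hc hcc => hchar c hc (by omega)) (by omega) hq'deg hTd hder
          intro a ha
          have hθ := hres a ha
          -- injectivity
          by_contra hne0
          have hco : (q' a).coeff (q a).natDegree
              = ((E':F) + 1 + ((q a).natDegree : F)) * (q a).coeff (q a).natDegree := by
            simp only [hq', Polynomial.coeff_add, Polynomial.coeff_C_mul]
            have h1 : ((X - C a) * derivative (q a)).coeff (q a).natDegree
                = (X * derivative (q a)).coeff (q a).natDegree
                  - a * (derivative (q a)).coeff (q a).natDegree := by
              rw [sub_mul, Polynomial.coeff_sub, Polynomial.coeff_C_mul]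
            have h2 : (derivative (q a)).coeff (q a).natDegree = 0 := by
              rw [Polynomial.coeff_derivative]
              simp [Polynomial.coeff_natDegree_succ_eq_zero]
            have h3 : (X * derivative (q a)).coeff (q a).natDegree
                = ((q a).natDegree : F) * (q a).coeff (q a).natDegree := by
              match hl : (q a).natDegree with
              | 0 => simp
              | (n+1) =>
                  rw [Polynomial.coeff_X_mul, Polynomial.coeff_derivative]
                  have : (q a).coeff (n+1) = (q a).coeff (q a).natDegree := by rw [hl]
                  push_cast; ring
            rw [h1, h2, h3]; ring
          rw [hθ] at hco
          simp only [Polynomial.coeff_zero] at hco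
          have hlc := Polynomial.leadingCoeff_ne_zero.mpr hne0
          rw [Polynomial.leadingCoeff] at hlc
          rcases mul_eq_zero.mp hco.symm with h' | h'
          · have hnd : (q a).natDegree ≤ m := natDegree_le_of_mem_degreeLT (hq a ha)
            have : ((E' + 1 + (q a).natDegree : ℕ) : F) ≠ 0 :=
              hchar _ (by omega) (by omega)
            push_cast at this
            exact this h'
          · exact hlc h'

-- helper: coefficient of product at sum of degree bounds
lemma coeff_mul_bound (f g : F[X]) (a b : ℕ) (hf : f.natDegree ≤ a) (hg : g.natDegree ≤ b) :
    (f * g).coeff (a + b) = f.coeff a * g.coeff b := by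
  rcases eq_or_ne f 0 with rfl | hf0
  · simp
  rcases eq_or_ne g 0 with rfl | hg0
  · simp
  rcases lt_or_eq_of_le hf with hlt | heq
  · rw [Polynomial.coeff_eq_zero_of_natDegree_lt hlt,
      Polynomial.coeff_eq_zero_of_natDegree_lt (by
        calc (f*g).natDegree ≤ f.natDegree + g.natDegree := Polynomial.natDegree_mul_le
          _ < a + b := by omega), zero_mul]
  rcases lt_or_eq_of_le hg with hlt2 | heq2
  · rw [Polynomial.coeff_eq_zero_of_natDegree_lt hlt2,
      Polynomial.coeff_eq_zero_of_natDegree_lt (by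
        calc (f*g).natDegree ≤ f.natDegree + g.natDegree := Polynomial.natDegree_mul_le
          _ < a + b := by omega), mul_zero]
  subst heq heq2
  exact Polynomial.coeff_mul_degree_add_degree f g

end Helpers

-- MAIN CONSTRUCTION: no clique B with (B.card-1)*(B.card-2) ≤ d < B.card*(B.card-1)
theorem no_critical_clique (p : ℕ) [hp : Fact p.Prime] (d : ℕ) (hpd : p = 2*d+1) (hd2 : 2 ≤ d)
    (B : Finset (ZMod p)) (hclq : ∀ x ∈ B, ∀ y ∈ B, x ≠ y → (x - y)^d = 1)
    (h2 : (B.card - 1) * (B.card - 2) ≤ d) (hK : d + 1 ≤ B.card * (B.card - 1)) :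
    False := by
  classical
  obtain ⟨t, ht⟩ : ∃ t, B.card = t := ⟨_, rfl⟩
  rw [ht] at h2 hK
  -- t ≥ 3
  have ht3 : 3 ≤ t := by
    by_contra h
    push_neg at h
    interval_cases t <;> omega
  -- t ≤ d + 1
  have htd : t ≤ d + 1 := by
    rcases Nat.lt_or_ge t 4 with h4 | h4
    · omega
    · obtain ⟨u, rfl⟩ : ∃ u, t = u + 2 := ⟨t - 2, by omega⟩
      have hu : 2 ≤ u := by omega
      have e1 : (u + 2 - 1) * (u + 2 - 2) = (u+1) * u := by congr 1
      have e2 : u + 2 ≤ (u+1) * u := by nlinarith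
      omega
  -- choose m
  set m : ℕ := if d + 1 ≤ t * (t-2) then t-3 else t-2 with hm
  have hm1 : m + 1 ≤ t - 1 := by
    rw [hm]; split <;> omega
  have hmd : m < d := by
    have : m ≤ t - 2 := by rw [hm]; split <;> omega
    omega
  -- key numeric facts about P := t*(m+1)
  have hP1 : d + 1 ≤ t * (m+1) := by
    rw [hm]; split
    · next hcase => have : t * (t - 3 + 1) = t * (t-2) := by congr 1; omega
                    rw [this]; omega
    · next hcase => have : t * (t - 2 + 1) = t * (t-1) := by congr 1; omega
                    rw [this]; omega
  have hP2 : t * (m+1) ≤ d + m + 2 := by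
    rw [hm]; split
    · next hcase =>
        have e1 : t * (t - 3 + 1) = t * (t-2) := by congr 1; omega
        have e2 : (t-1) * (t-2) = t * (t-2) - (t-2) := by
          rw [Nat.sub_mul, one_mul]
        rw [e1]; omega
    · next hcase =>
        have e1 : t * (t - 2 + 1) = t * (t-1) := by congr 1; omega
        have e2 : t * (t-1) = t * (t-2) + t := by
          have : t - 1 = (t - 2) + 1 := by omega
          rw [this, Nat.mul_add, mul_one]
        rw [e1]; omega
  set j' : ℕ := t * (m+1) - d with hj'
  have hj1 : 1 ≤ j' := by omega
  have hj2 : j' ≤ m + 2 := by omega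
  set M : ℕ := m + 2 - j' with hM
  have hledger_cond : M + (t - 1) * (m + 1) ≤ d + 1 := by
    have e1 : (t-1) * (m+1) = t * (m+1) - (m+1) := by rw [Nat.sub_mul, one_mul]
    omega
  -- polynomial setup
  set PB : (ZMod p)[X] := ∏ b ∈ B, (X - C b) with hPB
  have hPBmonic : PB.Monic := monic_prod_of_monic _ _ (fun b _ => monic_X_sub_C b)
  have hPBdeg : PB.natDegree = t := by
    rw [hPB, Polynomial.natDegree_prod]
    · simp only [Polynomial.natDegree_X_sub_C]
      rw [Finset.sum_const, smul_eq_mul, mul_one, ht]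
    · intro b _; exact Polynomial.X_sub_C_ne_zero b
  set H : ZMod p → (ZMod p)[X] := fun a => (X - C a)^(d+1) - (X - C a) with hHdef
  have hHdeg : ∀ a, (H a).natDegree = d + 1 := by
    intro a
    have h1 : ((X - C a)^(d+1)).natDegree = d+1 := by
      rw [Polynomial.natDegree_pow, Polynomial.natDegree_X_sub_C, mul_one]
    rw [hHdef]
    simp only
    rw [Polynomial.natDegree_sub_eq_left_of_natDegree_lt]
    · exact h1
    · rw [h1, Polynomial.natDegree_X_sub_C]; omega
  have hdvd : ∀ a ∈ B, PB ∣ H a := by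
    intro a ha
    rw [hPB]
    apply Finset.prod_dvd_of_coprime
    · intro x hx y hy hxy
      exact Polynomial.isCoprime_X_sub_C_of_isUnit_sub
        (isUnit_iff_ne_zero.mpr (sub_ne_zero.mpr hxy))
    · intro b hb
      rw [Polynomial.dvd_iff_isRoot]
      rw [Polynomial.IsRoot, hHdef]
      simp only [Polynomial.eval_sub, Polynomial.eval_pow, Polynomial.eval_X, Polynomial.eval_C]
      rcases eq_or_ne b a with rfl | hba
      · simp
      · rw [pow_succ, hclq b hb a ha hba, one_mul, sub_self]
  have hW : ∀ a ∈ B, ∃ Wa : (ZMod p)[X], H a = PB * Wa ∧ Wa.natDegree + t = d + 1 := by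
    intro a ha
    obtain ⟨Wa, hWa⟩ := hdvd a ha
    refine ⟨Wa, hWa, ?_⟩
    have hHne : H a ≠ 0 := by
      intro h0
      have := hHdeg a
      rw [h0, Polynomial.natDegree_zero] at this
      omega
    have hWne : Wa ≠ 0 := by rintro rfl; rw [mul_zero] at hWa; exact hHne hWa
    have hnd := hHdeg a
    rw [hWa, Polynomial.natDegree_mul hPBmonic.ne_zero hWne, hPBdeg] at hnd
    omega
  set D2 : ℕ := d + m + 2 - t with hD2
  set Zsub : Submodule (ZMod p) (ZMod p)[X] :=
    (Polynomial.degreeLT (ZMod p) D2).map (LinearMap.mulLeft (ZMod p) PB) with hZsub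
  haveI : Module.Finite (ZMod p) (Polynomial.degreeLT (ZMod p) D2) :=
    Module.Finite.equiv (Polynomial.degreeLTEquiv (ZMod p) D2).symm
  haveI : Module.Finite (ZMod p) Zsub := Module.Finite.map _ _
  have hZrank : Module.finrank (ZMod p) Zsub ≤ D2 := by
    calc Module.finrank (ZMod p) Zsub
        ≤ Module.finrank (ZMod p) (Polynomial.degreeLT (ZMod p) D2) :=
          Submodule.finrank_map_le _ _
      _ = D2 := by
          rw [(Polynomial.degreeLTEquiv (ZMod p) D2).finrank_eq, Module.finrank_pi,
            Fintype.card_fin]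
  have hmemZ : ∀ a : ↥B, ∀ i : Fin (m+1), H a.val * X^(i:ℕ) ∈ Zsub := by
    intro a i
    obtain ⟨Wa, hWa, hWdeg⟩ := hW a.val a.2
    rw [hZsub]
    rw [Submodule.mem_map]
    refine ⟨Wa * X^(i:ℕ), ?_, ?_⟩
    · rw [mem_degreeLT_iff]
      intro j hj
      apply Polynomial.coeff_eq_zero_of_natDegree_lt
      calc (Wa * X^(i:ℕ)).natDegree ≤ Wa.natDegree + (i:ℕ) := by
            have := Polynomial.natDegree_mul_le (p := Wa) (q := (X:(ZMod p)[X])^(i:ℕ))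
            rw [Polynomial.natDegree_X_pow] at this
            exact this
        _ < j := by have hi := i.2; omega
    · show PB * (Wa * X^(i:ℕ)) = H a.val * X^(i:ℕ)
      rw [← mul_assoc, ← hWa]
  -- the linear map
  set j2 : ℕ := j' - 1 with hj2def
  set w : ↥B → Fin (m+1) → (Zsub × (Fin j2 → ZMod p)) := fun a i =>
    (⟨H a.val * X^(i:ℕ), hmemZ a i⟩, fun l => ((X - C a.val) * X^(i:ℕ)).coeff (m - l)) with hwdef
  set Θ : ((a : ↥B) → Fin (m+1) → ZMod p) →ₗ[ZMod p] (Zsub × (Fin j2 → ZMod p)) :=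
    LinearMap.lsum (ZMod p) _ (ZMod p) (fun a =>
      LinearMap.lsum (ZMod p) _ (ZMod p) (fun i =>
        LinearMap.toSpanSingleton (ZMod p) _ (w a i))) with hΘ
  have hΘapply : ∀ v, Θ v = ∑ a : ↥B, ∑ i : Fin (m+1), v a i • w a i := by
    intro v
    rw [hΘ]
    rw [LinearMap.lsum_apply]
    simp only [LinearMap.coe_sum, Finset.sum_apply, LinearMap.coe_comp, Function.comp_apply,
      LinearMap.coe_proj, Function.eval]
    apply Finset.sum_congr rfl
    intro a _
    rw [LinearMap.lsum_apply]
    simp only [LinearMap.coe_sum, Finset.sum_apply, LinearMap.coe_comp, Function.comp_apply,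
      LinearMap.coe_proj, Function.eval, LinearMap.toSpanSingleton_apply]
  -- finrank comparison
  have hfrV : Module.finrank (ZMod p) ((a : ↥B) → Fin (m+1) → ZMod p) = t * (m+1) := by
    rw [Module.finrank_pi_fintype]
    simp only [Module.finrank_pi, Fintype.card_fin]
    rw [Finset.sum_const, smul_eq_mul, Finset.card_univ, Fintype.card_coe, ht]
  have hfrW : Module.finrank (ZMod p) (Zsub × (Fin j2 → ZMod p)) < t * (m+1) := by
    rw [Module.finrank_prod]
    have h5 : Module.finrank (ZMod p) (Fin j2 → ZMod p) = j2 := by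
      rw [Module.finrank_pi, Fintype.card_fin]
    rw [h5]
    omega
  have hninj : ¬ Function.Injective Θ := by
    intro hinj
    have := LinearMap.finrank_le_finrank_of_injective hinj
    omega
  obtain ⟨v, hv0, hvne⟩ : ∃ v, Θ v = 0 ∧ v ≠ 0 := by
    by_contra hcon
    push_neg at hcon
    apply hninj
    apply LinearMap.ker_eq_bot.mp
    rw [Submodule.eq_bot_iff]
    exact fun v hv => hcon v hv
  -- extract first component
  set π1 : (Zsub × (Fin j2 → ZMod p)) →ₗ[ZMod p] (ZMod p)[X] :=
    Zsub.subtype.comp (LinearMap.fst (ZMod p) _ _) with hπ1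
  have hZ0 : (∑ a : ↥B, ∑ i : Fin (m+1), v a i • (H a.val * X^(i:ℕ))) = 0 := by
    have h6 : π1 (Θ v) = 0 := by rw [hv0, map_zero]
    rw [hΘapply, map_sum] at h6
    rw [← h6]
    refine Finset.sum_congr rfl (fun a _ => ?_)
    rw [map_sum]
    refine Finset.sum_congr rfl (fun i _ => ?_)
    rw [map_smul]
    rfl
  -- second components
  have hC0 : ∀ l : Fin j2,
      (∑ a : ↥B, ∑ i : Fin (m+1), v a i * ((X - C a.val) * X^(i:ℕ)).coeff (m - l)) = 0 := by
    intro l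
    have h6 : ((LinearMap.proj l).comp
        (LinearMap.snd (ZMod p) Zsub (Fin j2 → ZMod p))) (Θ v) = 0 := by rw [hv0, map_zero]
    rw [hΘapply, map_sum] at h6
    rw [← h6]
    refine Finset.sum_congr rfl (fun a _ => ?_)
    rw [map_sum]
    refine Finset.sum_congr rfl (fun i _ => ?_)
    rw [map_smul]
    simp only [hwdef, LinearMap.coe_comp, Function.comp_apply, LinearMap.snd_apply,
      LinearMap.proj_apply, smul_eq_mul]
  -- the q polynomials
  set q : ZMod p → (ZMod p)[X] := fun x =>
    if hx : x ∈ B then ∑ i : Fin (m+1), C (v ⟨x, hx⟩ i) * X^(i:ℕ) else 0 with hqdef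
  have hqa : ∀ a : ↥B, q a.val = ∑ i : Fin (m+1), C (v a i) * X^(i:ℕ) := by
    intro a
    rw [hqdef]
    simp only [a.2, dif_pos, Subtype.coe_eta]
  have hqdeg : ∀ x ∈ B, q x ∈ degreeLT (ZMod p) (m+1) := by
    intro x hx
    have : q x = ∑ i : Fin (m+1), C (v ⟨x, hx⟩ i) * X^(i:ℕ) := hqa ⟨x, hx⟩
    rw [this]
    apply Submodule.sum_mem
    intro i _
    rw [mem_degreeLT_iff]
    intro jj hjj
    rw [Polynomial.coeff_C_mul, Polynomial.coeff_X_pow]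
    have hne : ¬ (jj = (i:ℕ)) := by have := i.2; omega
    simp [hne]
  have hqnd : ∀ x ∈ B, (q x).natDegree ≤ m := fun x hx =>
    natDegree_le_of_mem_degreeLT (hqdeg x hx)
  -- sum identity
  have hHq : (∑ x ∈ B, H x * q x) = 0 := by
    rw [← hZ0, ← Finset.sum_coe_sort B (fun x => H x * q x)]
    refine Finset.sum_congr rfl (fun a _ => ?_)
    rw [hqa a, Finset.mul_sum]
    refine Finset.sum_congr rfl (fun i _ => ?_)
    rw [Polynomial.smul_eq_C_mul]
    ring
  set TT : (ZMod p)[X] := ∑ x ∈ B, (X - C x) * q x with hTT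
  have hrel : (∑ x ∈ B, (X - C x)^(d+1) * q x) = TT := by
    have h7 : (∑ x ∈ B, ((X - C x)^(d+1) * q x - (X - C x) * q x)) = 0 := by
      rw [← hHq]
      refine Finset.sum_congr rfl (fun x _ => ?_)
      rw [hHdef]
      ring
    rw [Finset.sum_sub_distrib] at h7
    rw [hTT]
    exact sub_eq_zero.mp h7
  -- freebie A
  have hTThigh : ∀ i, m + 2 ≤ i → TT.coeff i = 0 := by
    intro i hi
    rw [hTT, Polynomial.finset_sum_coeff]
    refine Finset.sum_eq_zero (fun x hx => ?_)
    apply Polynomial.coeff_eq_zero_of_natDegree_lt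
    calc ((X - C x) * q x).natDegree ≤ (X - C x).natDegree + (q x).natDegree :=
          Polynomial.natDegree_mul_le
      _ ≤ 1 + m := by rw [Polynomial.natDegree_X_sub_C]; exact by have := hqnd x hx; omega
      _ < i := by omega
  have hA : (∑ x ∈ B, (q x).coeff m) = 0 := by
    have h8 := congrArg (fun f => Polynomial.coeff f (d+1+m)) hrel
    simp only [Polynomial.finset_sum_coeff] at h8
    have h9 : ∀ x ∈ B, ((X - C x)^(d+1) * q x).coeff (d+1+m) = (q x).coeff m := by
      intro x hx
      rw [coeff_mul_bound _ _ (d+1) m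
        (Polynomial.natDegree_pow_le.trans (by rw [Polynomial.natDegree_X_sub_C]; omega))
        (hqnd x hx)]
      have hmon : ((X - C x)^(d+1)).Monic := (monic_X_sub_C x).pow _
      have hco : ((X - C x)^(d+1)).coeff (d+1) = 1 := by
        have h11 := hmon.coeff_natDegree
        rwa [Polynomial.natDegree_pow, Polynomial.natDegree_X_sub_C, mul_one] at h11
      rw [hco, one_mul]
    rw [Finset.sum_congr rfl h9] at h8
    rw [h8, hTThigh (d+1+m) (by omega)]
  have hfree : TT.coeff (m+1) = 0 := by
    rw [hTT, Polynomial.finset_sum_coeff]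
    have h10 : ∀ x ∈ B, ((X - C x) * q x).coeff (m+1) = (q x).coeff m := by
      intro x hx
      rw [sub_mul, Polynomial.coeff_sub, Polynomial.coeff_X_mul, Polynomial.coeff_C_mul]
      rw [mem_degreeLT_iff.mp (hqdeg x hx) (m+1) (le_refl _)]
      ring
    rw [Finset.sum_congr rfl h10]
    exact hA
  -- TT in degreeLT M
  have hTTdeg : TT ∈ degreeLT (ZMod p) M := by
    rw [mem_degreeLT_iff]
    intro i hi
    rcases Nat.lt_or_ge i (m+1) with hlow | hhigh
    · -- imposed coefficients
      have hl : m - i < j2 := by omega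
      have h12 := hC0 ⟨m - i, hl⟩
      have h13 : m - (⟨m - i, hl⟩ : Fin j2) = i := by
        simp only
        omega
      rw [h13] at h12
      rw [← h12, hTT, ← Finset.sum_coe_sort B (fun x => (X - C x) * q x),
        Polynomial.finset_sum_coeff]
      refine Finset.sum_congr rfl (fun a _ => ?_)
      rw [hqa a, Finset.mul_sum, Polynomial.finset_sum_coeff]
      refine Finset.sum_congr rfl (fun i' _ => ?_)
      have : (X - C a.val) * (C (v a i') * X^(i':ℕ))
          = C (v a i') * ((X - C a.val) * X^(i':ℕ)) := by ring
      rw [this, Polynomial.coeff_C_mul]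
    · rcases Nat.eq_or_lt_of_le hhigh with heq | hlt
      · exact heq ▸ hfree
      · exact hTThigh i (by omega)
  -- apply the ledger
  have hchar : ∀ c : ℕ, 0 < c → c ≤ (d+1) + m → (c : ZMod p) ≠ 0 := by
    intro c hc hcle
    rw [Ne, ZMod.natCast_eq_zero_iff]
    intro hdv
    have := Nat.le_of_dvd hc hdv
    omega
  have hzero := ledger t B ht M (d+1) m q TT hchar hledger_cond hqdeg hTTdeg hrel
  apply hvne
  funext a i
  have hq0 := hzero a.val a.2
  have h14 : (q a.val).coeff (i:ℕ) = v a i := by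
    rw [hqa a, Polynomial.finset_sum_coeff]
    rw [Finset.sum_eq_single i]
    · rw [Polynomial.coeff_C_mul, Polynomial.coeff_X_pow]
      simp
    · intro b _ hbne
      rw [Polynomial.coeff_C_mul, Polynomial.coeff_X_pow]
      have : ¬((i:ℕ) = (b:ℕ)) := fun hh => hbne (Fin.ext hh.symm)
      simp [this]
    · intro hni
      exact absurd (Finset.mem_univ i) hni
  rw [hq0] at h14
  simp only [Polynomial.coeff_zero] at h14
  exact h14.symm

theorem clique_bound (p : ℕ) [hp : Fact p.Prime] (d : ℕ) (hpd : p = 2*d+1) (hd2 : 2 ≤ d)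
 :
    ∀ (B : Finset (ZMod p)), (∀ x ∈ B, ∀ y ∈ B, x ≠ y → (x - y)^d = 1) →
    B.card * (B.card - 1) ≤ d := by
  classical
  intro B
  induction B using Finset.strongInduction with
  | _ B ih =>
    intro hclq
    by_contra hK
    push_neg at hK
    rcases Nat.lt_or_ge d ((B.card - 1) * (B.card - 2)) with hbig | hsmall
    · have hne : B.Nonempty := by
        rcases Finset.eq_empty_or_nonempty B with rfl | h
        · simp at hK
        · exact h
      obtain ⟨b, hb⟩ := hne
      have hind := ih (B.erase b) (Finset.erase_ssubset hb)
        (fun x hx y hy hxy => hclq x (Finset.mem_of_mem_erase hx) y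
          (Finset.mem_of_mem_erase hy) hxy)
      rw [Finset.card_erase_of_mem hb] at hind
      have he : B.card - 1 - 1 = B.card - 2 := by omega
      rw [he] at hind
      omega
    · exact no_critical_clique p d hpd hd2 B hclq hsmall (by omega)

theorem restricted_diffset_decomposition_prime_form
    (p : ℕ) (hp : p.Prime) (hp1 : p % 4 = 1) (hp2 : 1 < p)
    (h : ∃ A : Finset (ZMod p),
      {x : ZMod p | ∃ a ∈ A, ∃ a' ∈ A, a ≠ a' ∧ a - a' = x} =
        {z : ZMod p | z ^ ((p - 1) / 2) = 1}) :
    ∃ n : ℕ, Odd n ∧ 0 < n ∧ 2 * p = n ^ 2 + 1 := by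
  classical
  haveI : Fact p.Prime := ⟨hp⟩
  obtain ⟨A, hA⟩ := h
  set d : ℕ := (p - 1) / 2 with hd
  have hp5 : 5 ≤ p := by omega
  have hpd : p = 2 * d + 1 := by omega
  have hd2 : 2 ≤ d := by omega
  -- clique property
  have hclq : ∀ x ∈ A, ∀ y ∈ A, x ≠ y → (x - y) ^ d = 1 := by
    intro x hx y hy hxy
    have hmem : (x - y) ∈ {u : ZMod p | ∃ a ∈ A, ∃ a' ∈ A, a ≠ a' ∧ a - a' = u} :=
      ⟨x, hx, y, hy, hxy, rfl⟩
    rw [hA] at hmem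
    exact hmem
  -- clique bound
  have hcb : A.card * (A.card - 1) ≤ d := clique_bound p d hpd hd2 A hclq
  -- QR finset
  set Q : Finset (ZMod p) := Finset.univ.filter (fun z => z ^ d = 1) with hQ
  -- coverage: Q ⊆ image of offDiag differences
  have hcover : Q.card ≤ A.card * A.card - A.card := by
    have hsub : Q ⊆ A.offDiag.image (fun ab => ab.1 - ab.2) := by
      intro z hz
      rw [hQ, Finset.mem_filter] at hz
      have hz2 : z ∈ {u : ZMod p | ∃ a ∈ A, ∃ a' ∈ A, a ≠ a' ∧ a - a' = u} := by
        rw [hA]; exact hz.2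
      obtain ⟨a, ha, a', ha', hne, heq⟩ := hz2
      rw [Finset.mem_image]
      exact ⟨(a, a'), Finset.mem_offDiag.mpr ⟨ha, ha', hne⟩, heq⟩
    calc Q.card ≤ (A.offDiag.image (fun ab => ab.1 - ab.2)).card := Finset.card_le_card hsub
      _ ≤ A.offDiag.card := Finset.card_image_le
      _ = A.card * A.card - A.card := by rw [Finset.offDiag_card]
  -- lower bound on Q.card
  have hQlow : d ≤ Q.card := by
    have hsub2 : (Finset.univ.erase (0 : ZMod p)).image (fun x => x * x) ⊆ Q := by
      intro z hz
      rw [Finset.mem_image] at hz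
      obtain ⟨x, hx, rfl⟩ := hz
      have hx0 : x ≠ 0 := Finset.ne_of_mem_erase hx
      rw [hQ, Finset.mem_filter]
      refine ⟨Finset.mem_univ _, ?_⟩
      have : (x * x) ^ d = x ^ (p - 1) := by
        rw [← pow_two, ← pow_mul]
        congr 1
        omega
      rw [this, ZMod.pow_card_sub_one_eq_one hx0]
    have hcard0 : (Finset.univ.erase (0 : ZMod p)).card = 2 * d := by
      rw [Finset.card_erase_of_mem (Finset.mem_univ _), Finset.card_univ, ZMod.card]
      omega
    have hfib : ∀ b ∈ (Finset.univ.erase (0 : ZMod p)).image (fun x => x * x),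
        ((Finset.univ.erase (0 : ZMod p)).filter (fun x => x * x = b)).card ≤ 2 := by
      intro b hb
      rw [Finset.mem_image] at hb
      obtain ⟨x0, hx0, rfl⟩ := hb
      have hsub3 : ((Finset.univ.erase (0 : ZMod p)).filter (fun x => x * x = x0 * x0))
          ⊆ {x0, -x0} := by
        intro y hy
        rw [Finset.mem_filter] at hy
        have h15 : (y - x0) * (y + x0) = 0 := by linear_combination hy.2
        rcases mul_eq_zero.mp h15 with h16 | h16
        · rw [Finset.mem_insert]
          exact Or.inl (sub_eq_zero.mp h16)
        · rw [Finset.mem_insert, Finset.mem_singleton]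
          exact Or.inr (eq_neg_of_add_eq_zero_left h16)
      calc _ ≤ ({x0, -x0} : Finset (ZMod p)).card := Finset.card_le_card hsub3
        _ ≤ 2 := Finset.card_insert_le _ _ |>.trans (by simp)
    have := Finset.card_le_mul_card_image (Finset.univ.erase (0 : ZMod p)) 2 hfib
    rw [hcard0] at this
    have := Finset.card_le_card hsub2
    omega
  -- combine
  obtain ⟨k, hk⟩ : ∃ k, A.card = k := ⟨_, rfl⟩
  rw [hk] at hcb hcover
  have hkk : k * (k - 1) = k * k - k := by
    rcases Nat.eq_zero_or_pos k with rfl | hkpos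
    · simp
    · have : k - 1 + 1 = k := by omega
      calc k * (k-1) = k * (k - 1 + 1) - k := by rw [Nat.mul_add, mul_one]; omega
        _ = k * k - k := by rw [this]
  have heq : k * (k - 1) = d := by omega
  have hk2 : 2 ≤ k := by
    by_contra hh
    push_neg at hh
    interval_cases k <;> omega
  obtain ⟨k', rfl⟩ : ∃ k', k = k' + 2 := ⟨k - 2, by omega⟩
  refine ⟨2 * k' + 3, ⟨k' + 1, by ring⟩, by omega, ?_⟩
  have hd' : d = (k' + 2) * (k' + 1) := by
    rw [← heq]
    congr 1
  rw [hpd, hd']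
  ring
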